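/- Let (X,L) be a quasi-polarized manifold of dimension n, i.e., X a smooth projective variety and L a nef and big line bundle. For 0 ≤ i ≤ n-1 the i-th sectional geometric genus satisfies g_i(X,L) = Σ_{j=0}^{n-i-1} (-1)^j·C(n-i, j)·h^0(K_X + (n-i-j)L) + Σ_{k=0}^{n-i} (-1)^{n-i-k}·h^{n-k}(O_X). -/

import Mathlib

/-- `C(t+j-1, j)` as a rational-valued function of an integer `t`
(the binomial basis polynomial used in the expansion of `χ(tL)`). -/
def ascBinom (t : ℤ) (j : ℕ) : ℚ :=
  (∏ i ∈ Finset.range j, ((t : ℚ) + i)) / (Nat.factorial j : ℚ)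

/-- Abstract invariants of a quasi-polarized manifold `(X, L)` of dimension `n`:
`X` a smooth complex projective variety and `L` a nef and big line bundle on `X`.
The fields record the standard cohomological invariants together with the
standard relations among them (binomial expansion of `χ(tL)`,
Kawamata–Viehweg vanishing plus Serre duality, connectedness). -/
structure QPolarized (n : ℕ) where
  /-- `h^q(X, 𝒪_X)` -/
  hq : ℕ → ℕ
  /-- `h^0(X, K_X + t L)`; in particular `h0adj 0 = h^0(K_X)` -/
  h0adj : ℕ → ℕ
  /-- the Euler–Poincaré characteristic `t ↦ χ(X, tL)` -/
  chi : ℤ → ℚ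
  /-- the coefficients `χ_j(X, L)` of `χ(tL)` in the binomial basis `C(t+j-1, j)` -/
  c : ℕ → ℚ
  /-- the degree `L^n` -/
  Ln : ℤ
  /-- the Kodaira dimension `κ(X)`, where `⊥` denotes `-∞` -/
  kappa : WithBot ℤ
  /-- the Iitaka–Kodaira dimension `κ(K_X + m L)`, where `⊥` denotes `-∞` -/
  kappaAdj : ℕ → WithBot ℤ
  /-- the dimension of the image of the Albanese map of `X` -/
  albImageDim : ℕ
  /-- the predicate "there exists a birational morphism `f : X → ℙ^n` such that
  `L = f^*(𝒪_{ℙ^n}(1))`" -/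
  birationalToProjSpace : Prop
  /-- `χ(tL) = ∑_{j=0}^n χ_j(X,L) · C(t+j-1, j)` for all integers `t` -/
  expansion : ∀ t : ℤ, chi t = ∑ j ∈ Finset.range (n + 1), c j * ascBinom t j
  /-- `χ(𝒪_X) = ∑_{q=0}^n (-1)^q h^q(𝒪_X)` -/
  chi_zero : chi 0 = ∑ q ∈ Finset.range (n + 1), (-1 : ℚ) ^ q * (hq q : ℚ)
  /-- Serre duality and Kawamata–Viehweg vanishing:
  `χ(-mL) = (-1)^n h^0(K_X + mL)` for every `m ≥ 1` -/
  serre : ∀ m : ℕ, 1 ≤ m → chi (-(m : ℤ)) = (-1 : ℚ) ^ n * (h0adj m : ℚ)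
  /-- the top binomial coefficient of `χ(tL)` is the degree `L^n` -/
  c_top : c n = (Ln : ℚ)
  /-- `X` is connected: `h^0(𝒪_X) = 1` -/
  h0_one : hq 0 = 1
  /-- Serre duality: `h^n(𝒪_X) = h^0(K_X)` -/
  serre_top : hq n = h0adj 0

namespace QPolarized

variable {n : ℕ}

/-- the `i`-th sectional geometric genus
`g_i(X,L) = (-1)^i (χ_{n-i}(X,L) - χ(𝒪_X)) + ∑_{j=0}^{n-i} (-1)^{n-i-j} h^{n-j}(𝒪_X)` -/
def g (X : QPolarized n) (i : ℕ) : ℚ :=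
  (-1 : ℚ) ^ i * (X.c (n - i) - X.chi 0)
    + ∑ j ∈ Finset.range (n - i + 1), (-1 : ℚ) ^ (n - i - j) * (X.hq (n - j) : ℚ)

/-- the iterated finite differences `F_i(t)` of `F_0 : t ↦ h^0(K_X + tL)`:
`F_i(t) = F_{i-1}(t+1) - F_{i-1}(t)` -/
def Fdiff (X : QPolarized n) : ℕ → ℕ → ℤ
  | 0 => fun t => (X.h0adj t : ℤ)
  | (i + 1) => fun t => X.Fdiff i (t + 1) - X.Fdiff i t

/-- the `i`-th Hilbert coefficient `A_i(X,L) = F_{n-i}(1)` -/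
def A (X : QPolarized n) (i : ℕ) : ℤ := X.Fdiff (n - i) 1

end QPolarized

lemma ascBinom_neg_nat (k j : ℕ) :
    ascBinom (-(k : ℤ)) j = (-1 : ℚ) ^ j * (k.choose j : ℚ) := by
  unfold ascBinom
  have hprod : ∏ i ∈ Finset.range j, (((-(k:ℤ) : ℤ) : ℚ) + i)
      = (-1:ℚ)^j * (k.descFactorial j : ℚ) := by
    induction j with
    | zero => simp
    | succ j ih =>
      rw [Finset.prod_range_succ, ih, Nat.descFactorial_succ]
      rcases le_or_gt j k with h | h
      · push_cast [h]
        ring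
      · have h0 : k.descFactorial j = 0 := Nat.descFactorial_eq_zero_iff_lt.mpr h
        simp [h0, Nat.sub_eq_zero_of_le h.le]
  rw [hprod, Nat.descFactorial_eq_factorial_mul_choose]
  push_cast
  have : (Nat.factorial j : ℚ) ≠ 0 := by
    exact_mod_cast Nat.factorial_ne_zero j
  field_simp

lemma chi_neg_eq (n : ℕ) (X : QPolarized n) (k : ℕ) :
    X.chi (-(k : ℤ)) = ∑ j ∈ Finset.range (n+1),
      (-1:ℚ)^j * (k.choose j : ℚ) * X.c j := by
  rw [X.expansion]
  refine Finset.sum_congr rfl fun j _ => ?_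
  rw [ascBinom_neg_nat]
  ring

lemma ortho_choose (m j : ℕ) :
    ∑ k ∈ Finset.range (m+1), (-1:ℚ)^k * (m.choose k : ℚ) * (k.choose j : ℚ)
      = if j = m then (-1:ℚ)^m else 0 := by
  rcases lt_or_ge m j with h | h
  · rw [if_neg (by omega)]
    refine Finset.sum_eq_zero fun k hk => ?_
    have hk' := Finset.mem_range.mp hk
    have : k.choose j = 0 := Nat.choose_eq_zero_of_lt (by omega)
    simp [this]
  · rcases eq_or_lt_of_le h with hjm | hjm
    · rw [if_pos hjm]
      subst hjm
      rw [Finset.sum_eq_single j]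
      · simp
      · intro k hk hne
        have hk' := Finset.mem_range.mp hk
        have : k.choose j = 0 := Nat.choose_eq_zero_of_lt (by omega)
        simp [this]
      · intro hj; exact absurd (Finset.mem_range.mpr (by omega)) hj
    · rw [if_neg (by omega)]
      rw [← Finset.sum_range_add_sum_Ico _ (show j ≤ m + 1 by omega)]
      have h1 : ∑ k ∈ Finset.range j, (-1:ℚ)^k * (m.choose k : ℚ) * (k.choose j : ℚ) = 0 :=
        Finset.sum_eq_zero fun k hk => by
          simp [Nat.choose_eq_zero_of_lt (Finset.mem_range.mp hk)]
      rw [h1, zero_add, Finset.sum_Ico_eq_sum_range]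
      have h2 : ∀ l ∈ Finset.range (m + 1 - j),
          (-1:ℚ)^(j+l) * (m.choose (j+l) : ℚ) * ((j+l).choose j : ℚ)
            = ((-1:ℚ)^j * (m.choose j : ℚ)) * ((-1:ℚ)^l * ((m-j).choose l : ℚ)) := by
        intro l hl
        have hl' : l < m + 1 - j := Finset.mem_range.mp hl
        have hc : m.choose (j+l) * (j+l).choose j = m.choose j * (m-j).choose l := by
          have := Nat.choose_mul (n := m) (k := j+l) (s := j) (by omega)
          simpa using this
        have hcq : (m.choose (j+l) : ℚ) * ((j+l).choose j : ℚ)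
            = (m.choose j : ℚ) * ((m-j).choose l : ℚ) := by exact_mod_cast congrArg (Nat.cast : ℕ → ℚ) hc
        rw [pow_add]
        linear_combination ((-1:ℚ)^j * (-1:ℚ)^l) * hcq
      rw [Finset.sum_congr rfl h2, ← Finset.mul_sum]
      have h3 : m + 1 - j = (m - j) + 1 := by omega
      rw [h3]
      have h4 : (∑ l ∈ Finset.range ((m-j)+1), (-1:ℚ)^l * ((m-j).choose l : ℚ)) = 0 := by
        have h5 := Int.alternating_sum_range_choose_of_ne (show m - j ≠ 0 by omega)
        have h6 := congrArg (fun z : ℤ => (z : ℚ)) h5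
        push_cast at h6
        simpa using h6
      rw [h4, mul_zero]

lemma c_eq_sum_chi (n : ℕ) (X : QPolarized n) (m : ℕ) (hm : m ≤ n) :
    X.c m = ∑ k ∈ Finset.range (m+1), (-1:ℚ)^k * (m.choose k : ℚ) * X.chi (-(k : ℤ)) := by
  symm
  calc ∑ k ∈ Finset.range (m+1), (-1:ℚ)^k * (m.choose k : ℚ) * X.chi (-(k : ℤ))
      = ∑ k ∈ Finset.range (m+1), ∑ j ∈ Finset.range (n+1),
          ((-1:ℚ)^k * (m.choose k : ℚ) * (k.choose j : ℚ)) * ((-1:ℚ)^j * X.c j) := by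
        refine Finset.sum_congr rfl fun k _ => ?_
        rw [chi_neg_eq n X k, Finset.mul_sum]
        refine Finset.sum_congr rfl fun j _ => ?_
        ring
    _ = ∑ j ∈ Finset.range (n+1), (∑ k ∈ Finset.range (m+1),
          (-1:ℚ)^k * (m.choose k : ℚ) * (k.choose j : ℚ)) * ((-1:ℚ)^j * X.c j) := by
        rw [Finset.sum_comm]
        exact Finset.sum_congr rfl fun j _ => (Finset.sum_mul _ _ _).symm
    _ = ∑ j ∈ Finset.range (n+1),
          (if j = m then (-1:ℚ)^m else 0) * ((-1:ℚ)^j * X.c j) := by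
        exact Finset.sum_congr rfl fun j _ => by rw [ortho_choose]
    _ = X.c m := by
        simp only [ite_mul, zero_mul, Finset.sum_ite_eq', Finset.mem_range]
        rw [if_pos (by omega)]
        have hsq : (-1:ℚ)^m * (-1:ℚ)^m = 1 := by
          rw [← pow_add, ← two_mul, pow_mul]; norm_num
        rw [← mul_assoc, hsq, one_mul]

/-- For a quasi-polarized manifold `(X,L)` of dimension `n` and
`0 ≤ i ≤ n-1`,
`g_i(X,L) = ∑_{j=0}^{n-i-1} (-1)^j C(n-i,j) h^0(K_X+(n-i-j)L)
  + ∑_{k=0}^{n-i} (-1)^{n-i-k} h^{n-k}(𝒪_X)`. -/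
theorem sectional_genus_formula (n : ℕ) (X : QPolarized n) (i : ℕ) (hi : i + 1 ≤ n) :
    X.g i = ∑ j ∈ Finset.range (n - i),
        (-1 : ℚ) ^ j * (Nat.choose (n - i) j : ℚ) * (X.h0adj (n - i - j) : ℚ)
      + ∑ k ∈ Finset.range (n - i + 1), (-1 : ℚ) ^ (n - i - k) * (X.hq (n - k) : ℚ) := by
  simp only [QPolarized.g]
  set m := n - i with hmdef
  have hm1 : 1 ≤ m := by omega
  have hmn : m ≤ n := by omega
  congr 1
  rw [c_eq_sum_chi n X m hmn]
  rw [Finset.sum_range_succ']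
  simp only [pow_zero, Nat.choose_zero_right, Nat.cast_one, one_mul, Nat.cast_zero, neg_zero]
  rw [add_sub_cancel_right, Finset.mul_sum]
  conv_rhs => rw [← Finset.sum_range_reflect]
  refine Finset.sum_congr rfl fun k hk => ?_
  have hk' : k < m := Finset.mem_range.mp hk
  rw [X.serre (k+1) (by omega)]
  have h1 : m - (m - 1 - k) = k + 1 := by omega
  have h2 : m - 1 - k = m - (k+1) := by omega
  rw [h1, h2, Nat.choose_symm (show k + 1 ≤ m by omega)]
  have h4 : (-1:ℚ)^(m-(k+1)) = (-1:ℚ)^m * (-1:ℚ)^(k+1) := by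
    have hsum : (-1:ℚ)^(m-(k+1)) * (-1:ℚ)^(k+1) = (-1:ℚ)^m := by
      rw [← pow_add]; congr 1; omega
    have hsq : (-1:ℚ)^(k+1) * (-1:ℚ)^(k+1) = 1 := by
      rw [← pow_add, ← two_mul, pow_mul]; norm_num
    calc (-1:ℚ)^(m-(k+1)) = (-1:ℚ)^(m-(k+1)) * ((-1:ℚ)^(k+1) * (-1:ℚ)^(k+1)) := by
          rw [hsq, mul_one]
      _ = (-1:ℚ)^m * (-1:ℚ)^(k+1) := by rw [← mul_assoc, hsum]
  have h5 : (-1:ℚ)^i * (-1:ℚ)^n = (-1:ℚ)^m := by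
    rw [← pow_add, show i + n = m + 2 * i by omega, pow_add, pow_mul]
    norm_num
  rw [h4]
  linear_combination ((-1:ℚ)^(k+1) * (m.choose (k+1) : ℚ) * (X.h0adj (k+1) : ℚ)) * h5
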